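/- Let φ : ℝⁿ → (−∞,∞] be proper, lower semicontinuous, τ-weakly convex, and L_φ-Lipschitz continuous on its domain. For v ∈ ℝⁿ, x ∈ dom φ, and α ∈ (0, 1/(2τ)), define F_v^α(x) := x − prox_{αφ}(x − αv). Then ‖F_v^α(x)‖² ≤ 4 L_φ² α² + 4 ‖v‖² α². -/

import Mathlib

noncomputable section
set_option maxHeartbeats 1600000

/-- Clear the `1/(2α)` denominator in an inequality. -/
lemma stmt_10_aux (a b c d α : ℝ) (hα : 0 < α)
    (h : a + 1/(2*α)*b ≤ c + 1/(2*α)*d) : 2*α*a + b ≤ 2*α*c + d := by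
  have h2 := mul_le_mul_of_nonneg_left h (by positivity : (0:ℝ) ≤ 2*α)
  have hc : 2*α*(1/(2*α)) = 1 := by field_simp
  rw [mul_add, mul_add, ← mul_assoc, ← mul_assoc, hc, one_mul, one_mul] at h2
  exact h2


/-- `h` is proper: it never takes the value −∞ and is finite somewhere. -/
def ProperFn {n : ℕ} (h : EuclideanSpace ℝ (Fin n) → EReal) : Prop :=
  (∀ z, h z ≠ ⊥) ∧ ∃ z, h z ≠ ⊤

/-- `h` is τ-weakly convex: h + (τ/2)‖·‖² is convex on the domain of `h`. -/
def WeaklyConvex {n : ℕ} (τ : ℝ) (h : EuclideanSpace ℝ (Fin n) → EReal) : Prop :=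
  ∀ x y : EuclideanSpace ℝ (Fin n), h x ≠ ⊤ → h y ≠ ⊤ → ∀ t : ℝ, 0 ≤ t → t ≤ 1 →
    h (t • x + (1 - t) • y) + (((τ/2) * ‖t • x + (1 - t) • y‖ ^ 2 : ℝ) : EReal)
      ≤ (t : EReal) * (h x + (((τ/2) * ‖x‖ ^ 2 : ℝ) : EReal))
        + ((1 - t : ℝ) : EReal) * (h y + (((τ/2) * ‖y‖ ^ 2 : ℝ) : EReal))

/-- Lemma E.4: step-length bound ‖x − prox_{αφ}(x − αv)‖² ≤ 4L_φ²α² + 4‖v‖²α². -/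
theorem stmt_10 {n : ℕ} (φ : EuclideanSpace ℝ (Fin n) → EReal) (τ Lφ α : ℝ)
    (hτ : 0 < τ) (hLφ : 0 < Lφ)
    (hproper : ProperFn φ) (hlsc : LowerSemicontinuous φ)
    (hwc : WeaklyConvex τ φ)
    (hLip : ∀ x y, φ x ≠ ⊤ → φ y ≠ ⊤ → φ x ≤ φ y + ((Lφ * ‖x - y‖ : ℝ) : EReal))
    (hα : 0 < α) (hα' : α < 1/(2*τ))
    (v x p : EuclideanSpace ℝ (Fin n)) (hx : φ x ≠ ⊤)
    (hp : ∀ y, φ p + (((1/(2*α)) * ‖(x - α • v) - p‖ ^ 2 : ℝ) : EReal)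
        ≤ φ y + (((1/(2*α)) * ‖(x - α • v) - y‖ ^ 2 : ℝ) : EReal)) :
    ‖x - p‖ ^ 2 ≤ 4 * Lφ ^ 2 * α ^ 2 + 4 * ‖v‖ ^ 2 * α ^ 2 := by
  obtain ⟨hbot, -⟩ := hproper
  have hxb : φ x = ((φ x).toReal : EReal) := (EReal.coe_toReal hx (hbot x)).symm
  set b := (φ x).toReal with hbdef
  -- φ p is finite
  have hpx := hp x
  have hptop : φ p ≠ ⊤ := by
    intro h
    rw [h, hxb, EReal.top_add_of_ne_bot (EReal.coe_ne_bot _)] at hpx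
    have he : ((b:EReal) + ((1/(2*α) * ‖x - α • v - x‖^2 : ℝ) : EReal))
        = ((b + 1/(2*α) * ‖x - α • v - x‖^2 : ℝ) : EReal) := by norm_cast
    rw [he, top_le_iff] at hpx
    exact EReal.coe_ne_top _ hpx
  have hpa : φ p = ((φ p).toReal : EReal) := (EReal.coe_toReal hptop (hbot p)).symm
  set a := (φ p).toReal with hadef
  -- the intermediate point
  set z : EuclideanSpace ℝ (Fin n) := (9/10 : ℝ) • p + (1 - (9/10:ℝ)) • x with hzdef
  have hwcz := hwc p x hptop hx (9/10) (by norm_num) (by norm_num)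
  rw [hpa, hxb] at hwcz
  have hztop : φ z ≠ ⊤ := by
    intro h
    rw [← hzdef, h, EReal.top_add_of_ne_bot (EReal.coe_ne_bot _)] at hwcz
    have he : ((9/10 : ℝ) : EReal) * ((a:EReal) + ((τ/2 * ‖p‖^2 : ℝ):EReal))
        + ((1 - 9/10 : ℝ) : EReal) * ((b:EReal) + ((τ/2 * ‖x‖^2 : ℝ):EReal))
        = (((9/10 : ℝ) * (a + τ/2 * ‖p‖^2) + (1 - 9/10 : ℝ) * (b + τ/2 * ‖x‖^2) : ℝ) : EReal) := by
      norm_cast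
    rw [he, top_le_iff] at hwcz
    exact EReal.coe_ne_top _ hwcz
  have hzc : φ z = ((φ z).toReal : EReal) := (EReal.coe_toReal hztop (hbot z)).symm
  set c := (φ z).toReal with hcdef
  rw [← hzdef, hzc] at hwcz
  -- real-valued inequalities
  set u : EuclideanSpace ℝ (Fin n) := x - α • v with hudef
  have h1 : a + 1/(2*α) * ‖u - p‖^2 ≤ b + 1/(2*α) * ‖u - x‖^2 := by
    rw [hpa, hxb] at hpx; exact_mod_cast hpx
  have hpz := hp z
  rw [hpa, hzc] at hpz
  have h2 : a + 1/(2*α) * ‖u - p‖^2 ≤ c + 1/(2*α) * ‖u - z‖^2 := by exact_mod_cast hpz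
  have h3 : c + τ/2 * ‖z‖^2
      ≤ 9/10 * (a + τ/2 * ‖p‖^2) + (1 - 9/10) * (b + τ/2 * ‖x‖^2) := by
    exact_mod_cast hwcz
  have h4 : b ≤ a + Lφ * ‖x - p‖ := by
    have := hLip x p hx hptop
    rw [hpa, hxb] at this; exact_mod_cast this
  -- norm identities
  have e1 : ‖u - x‖ = α * ‖v‖ := by
    have : u - x = -(α • v) := by rw [hudef]; abel
    rw [this, norm_neg, norm_smul, Real.norm_eq_abs, abs_of_pos hα]
  have e2 : ‖u - p‖^2 = ‖x - p‖^2 - 2*α*(inner ℝ (x - p) v : ℝ) + α^2*‖v‖^2 := by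
    have : u - p = (x - p) - α • v := by rw [hudef]; abel
    rw [this, norm_sub_sq_real, real_inner_smul_right, norm_smul, Real.norm_eq_abs,
      abs_of_pos hα, mul_pow]
    ring
  have key : ∀ w w' : EuclideanSpace ℝ (Fin n),
      ‖(9/10:ℝ) • w + (1/10:ℝ) • w'‖^2 = 9/10*‖w‖^2 + 1/10*‖w'‖^2 - 9/100*‖w - w'‖^2 := by
    intro w w'
    have hi := norm_sub_sq_real w w'
    rw [norm_add_sq_real, real_inner_smul_left, real_inner_smul_right, norm_smul, norm_smul,
      Real.norm_eq_abs, Real.norm_eq_abs]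
    rw [abs_of_pos (by norm_num : (0:ℝ) < 9/10), abs_of_pos (by norm_num : (0:ℝ) < 1/10),
      mul_pow, mul_pow]
    nlinarith [hi]
  have e3 : ‖u - z‖^2 = 9/10*‖u - p‖^2 + 1/10*‖u - x‖^2 - 9/100*‖x - p‖^2 := by
    have h : u - z = (9/10:ℝ) • (u - p) + (1/10:ℝ) • (u - x) := by
      rw [hzdef]; module
    rw [h, key]
    have : u - p - (u - x) = x - p := by abel
    rw [this]
  have e4 : ‖z‖^2 = 9/10*‖p‖^2 + 1/10*‖x‖^2 - 9/100*‖x - p‖^2 := by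
    have h : z = (9/10:ℝ) • p + (1/10:ℝ) • x := by rw [hzdef]; module
    rw [h, key, norm_sub_rev]
  have e5 : (inner ℝ (x - p) v : ℝ) ≤ ‖x - p‖ * ‖v‖ := real_inner_le_norm _ _
  have e1sq : ‖u - x‖^2 = α^2 * ‖v‖^2 := by rw [e1]; ring
  -- clear denominators
  have M2 : 2*α*a + ‖u - p‖^2 ≤ 2*α*c + ‖u - z‖^2 := stmt_10_aux _ _ _ _ _ hα h2
  have M3 := mul_le_mul_of_nonneg_left h3 (by positivity : (0:ℝ) ≤ 2*α)
  rw [e3] at M2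
  rw [e4] at M3
  set R := ‖x - p‖ with hR
  have hR0 : 0 ≤ R := norm_nonneg _
  have hV0 : 0 ≤ ‖v‖ := norm_nonneg _
  -- strong convexity gain (multiplied by 2α)
  have M5 : 2*α*a + ‖u - p‖^2 ≤ 2*α*b + ‖u - x‖^2 + (9/10)*(α*τ - 1)*R^2 := by
    nlinarith [M2, M3]
  rw [e1sq, e2] at M5
  have hτα' : 2*α*τ < 1 := by
    rw [lt_div_iff₀ (by linarith : (0:ℝ) < 2*τ)] at hα'
    linarith
  have f1 : 0 ≤ (1 - 2*α*τ) * R^2 :=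
    mul_nonneg (by linarith) (sq_nonneg R)
  have f2 : 2*α*(inner ℝ (x - p) v : ℝ) ≤ 2*α*(R*‖v‖) := by
    have := mul_le_mul_of_nonneg_left e5 (by positivity : (0:ℝ) ≤ 2*α)
    linarith
  have G1 : (29/20)*R^2 ≤ 2*α*Lφ*R + 2*α*(R*‖v‖) := by
    nlinarith [M5, mul_le_mul_of_nonneg_left h4 (by positivity : (0:ℝ) ≤ 2*α), f1, f2]
  -- bound on R
  have hRle : R ≤ (40/29)*α*(Lφ + ‖v‖) := by
    rcases eq_or_lt_of_le hR0 with h | hRpos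
    · rw [← h]; positivity
    · have h' : (29/20)*R*R ≤ (2*α*(Lφ + ‖v‖))*R := by nlinarith [G1]
      have := (mul_le_mul_iff_left₀ hRpos).mp h'
      linarith
  have hsq := mul_self_le_mul_self hR0 hRle
  nlinarith [hsq, mul_nonneg (sq_nonneg α) (sq_nonneg (Lφ - ‖v‖)),
    mul_nonneg (sq_nonneg α) (add_nonneg (sq_nonneg Lφ) (sq_nonneg ‖v‖))]
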